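/- Let β>0, ξ>0, μ>0, γ>0, ρ>0, κ>0, ν>0, α>1, ω>1, and let (S*, I*, W*, J*) be a solution of the equilibrium equations of the reduced SIRWJS system with I* > 0, W* > 0, J* > 0 and ρ+μ - νβξW* ≠ 0. Then I* = μ(1/(γ+μ) - 1/β) + (ωκ/(γ+μ) + μνξ/(ρ+μ))·W*, and J* = νβI*W*/(ρ+μ - νβξW*). -/

import Mathlib

/-- At a positive equilibrium of the reduced SIRWJS system (with `ξ > 0` and
`ρ + μ - νβξW* ≠ 0`), the infectious components satisfy
`I* = μ(1/(γ+μ) - 1/β) + (ωκ/(γ+μ) + μνξ/(ρ+μ))·W*` and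
`J* = νβI*W*/(ρ+μ - νβξW*)`. -/
theorem sirwjs_equilibrium_I_J_formulas
    (β ξ μ γ ρ κ ν α ω : ℝ)
    (hβ : 0 < β) (hξ : 0 < ξ) (hμ : 0 < μ) (hγ : 0 < γ) (hρ : 0 < ρ)
    (hκ : 0 < κ) (hν : 0 < ν) (hα : 1 < α) (hω : 1 < ω)
    (S I W J : ℝ)
    (hI0 : 0 < I) (hW0 : 0 < W) (hJ0 : 0 < J)
    (hden : ρ + μ - ν * β * ξ * W ≠ 0)
    (e1 : -β * (I + ξ * J) * S + ω * κ * W + μ * (1 - S) = 0)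
    (e2 : β * (I + ξ * J) * S - (γ + μ) * I = 0)
    (e3 : α * κ * (1 - S - I - W - J) - ω * κ * W - ν * β * (I + ξ * J) * W - μ * W = 0)
    (e4 : ν * β * (I + ξ * J) * W - (μ + ρ) * J = 0) :
    I = μ * (1 / (γ + μ) - 1 / β) + (ω * κ / (γ + μ) + μ * ν * ξ / (ρ + μ)) * W ∧
    J = ν * β * I * W / (ρ + μ - ν * β * ξ * W) := by
  have hγμ : (γ + μ) ≠ 0 := by positivity
  have hρμ : (ρ + μ) ≠ 0 := by positivity
  have hβ' : β ≠ 0 := ne_of_gt hβ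
  have hJeq : J * (ρ + μ - ν * β * ξ * W) = ν * β * I * W := by
    linear_combination -e4
  have h1 : β * (μ + ρ) * S * J = (γ + μ) * (ρ + μ - ν * β * ξ * W) * J := by
    linear_combination (-β*S)*e4 + (ν*β*W)*e2 + (γ+μ)*e4
  have hS : β * (μ + ρ) * S = (γ + μ) * (ρ + μ - ν * β * ξ * W) :=
    mul_right_cancel₀ (ne_of_gt hJ0) h1
  constructor
  · field_simp
    linear_combination (-β*(ρ+μ))*(e1 + e2) - μ*hS
  · rw [eq_div_iff hden]
    linarith [hJeq]
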